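/- arXiv:2002.11096 — 3 statements merged into one kernel-verified Lean document; each statement's English description precedes it below -/
import Mathlib

section
/- With infinite observational data and sampling according to a predefined ratio: in the stratified sampling model with allocation (x_1, x_2, x_3, x_4) = (a_1/(2(a_1+a_3)), a_2/(2(a_2+a_4)), a_3/(2(a_1+a_3)), a_4/(2(a_2+a_4))) (assuming a_1+a_3 > 0 and a_2+a_4 > 0), suppose 0 < ε ≤ 1, 0 < δ < 1, each x_j·m is a positive integer, and p_3+p_7 > 0, p_4+p_8 > 0, p_1+p_5 > 0, p_2+p_6 > 0. If m ≥ (18 ln(8/δ)/ε²) · max( 2(a_2+a_4)²/min((p_3+p_7)², (p_4+p_8)²), 2(a_1+a_3)²/min((p_1+p_5)², (p_2+p_6)²) ), then P(|ATE-hat − ATE(p_1,...,p_8)| ≥ ε) < δ. -/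
open MeasureTheory ProbabilityTheory

/-- The average treatment effect as a function of the joint distribution
`p : Fin 8 → ℝ`, where `p i` here is `p_{i+1}` in the paper. -/
noncomputable def ATE (p : Fin 8 → ℝ) : ℝ :=
  p 6 * (p 0 + p 2 + p 4 + p 6) / (p 6 + p 2)
    + p 7 * (1 - p 0 - p 2 - p 4 - p 6) / (p 7 + p 3)
    - p 4 * (p 0 + p 2 + p 4 + p 6) / (p 4 + p 0)
    - p 5 * (1 - p 0 - p 2 - p 4 - p 6) / (p 5 + p 1)

/-- The joint distribution `p` of `(Y,T,Z)` obtained from the observational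
distribution `a` of `(Y,T)` and the conditional probabilities
`q j = P(Z=0 | (Y,T) = j-th outcome)`. -/
noncomputable def pOf (a q : Fin 4 → ℝ) : Fin 8 → ℝ :=
  ![a 0 * q 0, a 0 * (1 - q 0), a 1 * q 1, a 1 * (1 - q 1),
    a 2 * q 2, a 2 * (1 - q 2), a 3 * q 3, a 3 * (1 - q 3)]

section AteAux

open Real

lemma iIndepFun_precomp' {Ω : Type*} [MeasurableSpace Ω] {μ : Measure Ω}
    {ι κ : Type*} {β : Type*} [mβ : MeasurableSpace β] {X : ι → Ω → β}
    (f : κ → ι) (hf : Function.Injective f)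
    (h : iIndepFun X μ) :
    iIndepFun (fun k => X (f k)) μ := by
  classical
  rw [iIndepFun_iff_measure_inter_preimage_eq_mul] at h ⊢
  intro S sets hsets
  have key := h (S.image f) (sets := Function.extend f sets fun _ => Set.univ)
    (by
      intro i hi
      obtain ⟨k, hk, rfl⟩ := Finset.mem_image.mp hi
      rw [hf.extend_apply]
      exact hsets k hk)
  rw [Finset.set_biInter_finset_image, Finset.prod_image (fun k _ l _ h => hf h)] at key
  simp only [hf.extend_apply] at key
  exact key

lemma hoeffding_core (q x : ℝ) (hq0 : 0 ≤ q) (hq1 : q ≤ 1) (hx : 0 ≤ x) :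
    1 - q + q * Real.exp x ≤ Real.exp (q * x + x ^ 2 / 8) := by
  set d : ℝ → ℝ := fun y => 1 - q + q * Real.exp y with hd_def
  have hdpos : ∀ y, 0 < d y := by
    intro y
    rcases eq_or_lt_of_le hq1 with h | h
    · have : d y = Real.exp y := by simp [hd_def, ← h]
      rw [this]; exact Real.exp_pos y
    · have h1 : 0 ≤ q * Real.exp y := mul_nonneg hq0 (Real.exp_pos y).le
      simp only [hd_def]; linarith
  have hdd : ∀ y, HasDerivAt d (q * Real.exp y) y := by
    intro y
    exact ((Real.hasDerivAt_exp y).const_mul q).const_add (1 - q)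
  set ψ : ℝ → ℝ := fun y => q + y / 4 - q * Real.exp y / d y with hψ_def
  set φ : ℝ → ℝ := fun y => q * y + y ^ 2 / 8 - Real.log (d y) with hφ_def
  -- derivative of ψ
  have hχ : ∀ y, HasDerivAt ψ
      (1 / 4 - (q * Real.exp y * d y - q * Real.exp y * (q * Real.exp y)) / (d y) ^ 2) y := by
    intro y
    have h1 : HasDerivAt (fun y : ℝ => q + y / 4) (1 / 4) y := by
      simpa using ((hasDerivAt_id y).div_const 4).const_add q
    have h2 : HasDerivAt (fun y => q * Real.exp y / d y)
        ((q * Real.exp y * d y - q * Real.exp y * (q * Real.exp y)) / (d y) ^ 2) y :=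
      ((Real.hasDerivAt_exp y).const_mul q).div (hdd y) (hdpos y).ne'
    exact h1.sub h2
  have hχnonneg : ∀ y, 0 ≤ 1 / 4 -
      (q * Real.exp y * d y - q * Real.exp y * (q * Real.exp y)) / (d y) ^ 2 := by
    intro y
    have hD := hdpos y
    rw [sub_nonneg, div_le_iff₀ (by positivity)]
    have key : ∀ u D : ℝ, u * D - u * u ≤ 1 / 4 * D ^ 2 := by
      intro u D; nlinarith [sq_nonneg (D - 2 * u)]
    exact key _ _
  have hψmono : Monotone ψ :=
    monotone_of_deriv_nonneg (fun y => (hχ y).differentiableAt)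
      (fun y => by rw [(hχ y).deriv]; exact hχnonneg y)
  have hψ0 : ψ 0 = 0 := by
    simp [hψ_def, hd_def, Real.exp_zero]
  have hψnonneg : ∀ y, 0 ≤ y → 0 ≤ ψ y := fun y hy => hψ0 ▸ hψmono hy
  -- derivative of φ
  have hφd : ∀ y, HasDerivAt φ (ψ y) y := by
    intro y
    have h1 : HasDerivAt (fun y : ℝ => q * y + y ^ 2 / 8) (q + 2 * y / 8) y := by
      have := ((hasDerivAt_id y).const_mul q).add ((hasDerivAt_pow 2 y).div_const 8)
      exact this.congr_deriv (by norm_num)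
    have h2 : HasDerivAt (fun y => Real.log (d y)) (q * Real.exp y / d y) y :=
      (hdd y).log (hdpos y).ne'
    have := h1.sub h2
    refine this.congr_deriv ?_
    simp only [hψ_def]; ring
  have hφmono : MonotoneOn φ (Set.Ici 0) := by
    refine monotoneOn_of_deriv_nonneg (convex_Ici 0)
      (Differentiable.continuous fun y => (hφd y).differentiableAt).continuousOn
      (fun y _ => (hφd y).differentiableAt.differentiableWithinAt)
      (fun y hy => ?_)
    · rw [(hφd y).deriv]
      exact hψnonneg y (le_of_lt (by simpa using hy))
  have hφ0 : φ 0 = 0 := by simp [hφ_def, hd_def, Real.exp_zero]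
  have hφx : 0 ≤ φ x := hφ0 ▸ hφmono (Set.self_mem_Ici) hx hx
  have hlog : Real.log (d x) ≤ q * x + x ^ 2 / 8 := by
    simp only [hφ_def] at hφx; linarith
  calc d x = Real.exp (Real.log (d x)) := (Real.exp_log (hdpos x)).symm
    _ ≤ Real.exp (q * x + x ^ 2 / 8) := Real.exp_le_exp.mpr hlog

variable {Ω : Type*} [MeasurableSpace Ω]

lemma bernoulli_mgf (μ : Measure Ω) [IsProbabilityMeasure μ] {X : Ω → Bool}
    (hX : Measurable X) {q : ℝ} (hq0 : 0 ≤ q)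
    (hdist : μ {ω | X ω = true} = ENNReal.ofReal q) (l : ℝ) :
    mgf (fun ω => if X ω = true then (1 : ℝ) else 0) μ l = 1 - q + q * Real.exp l := by
  have hs : MeasurableSet {ω | X ω = true} := hX (measurableSet_singleton true)
  have hfun : (fun ω => Real.exp (l * (if X ω = true then (1 : ℝ) else 0)))
      = fun ω => Set.indicator {ω | X ω = true} (fun _ => Real.exp l - 1) ω + 1 := by
    funext ω
    by_cases h : X ω = true
    · simp [h, Set.indicator_of_mem, Set.mem_setOf_eq]
    · simp [h, Set.indicator_of_notMem, Set.mem_setOf_eq]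
  rw [mgf, hfun, integral_add (((integrable_const _).indicator hs)) (integrable_const 1),
    integral_indicator_const _ hs, integral_const, measureReal_def, hdist,
    ENNReal.toReal_ofReal hq0]
  simp only [measureReal_def, measure_univ, ENNReal.toReal_one, smul_eq_mul]
  ring

lemma bernoulli_exp_integrable (μ : Measure Ω) [IsProbabilityMeasure μ] {X : Ω → Bool}
    (hX : Measurable X) (l : ℝ) :
    Integrable (fun ω => Real.exp (l * (if X ω = true then (1 : ℝ) else 0))) μ := by
  have hs : MeasurableSet {ω | X ω = true} := hX (measurableSet_singleton true)
  have hfun : (fun ω => Real.exp (l * (if X ω = true then (1 : ℝ) else 0)))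
      = fun ω => Set.indicator {ω | X ω = true} (fun _ => Real.exp l - 1) ω + 1 := by
    funext ω
    by_cases h : X ω = true
    · simp [h, Set.indicator_of_mem, Set.mem_setOf_eq]
    · simp [h, Set.indicator_of_notMem, Set.mem_setOf_eq]
  rw [hfun]
  exact ((integrable_const _).indicator hs).add (integrable_const 1)

lemma binom_tail_upper (μ : Measure Ω) [IsProbabilityMeasure μ]
    {N : ℕ} {X : Fin N → Ω → Bool} (hX : ∀ i, Measurable (X i))
    (hind : iIndepFun X μ) {q : ℝ} (hq0 : 0 ≤ q) (hq1 : q ≤ 1)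
    (hdist : ∀ i, μ {ω | X i ω = true} = ENNReal.ofReal q) {t : ℝ} (ht : 0 ≤ t) :
    μ {ω | (N : ℝ) * (q + t) ≤ ∑ i, (if X i ω = true then (1 : ℝ) else 0)}
      ≤ ENNReal.ofReal (Real.exp (-2 * N * t ^ 2)) := by
  set R : Fin N → Ω → ℝ := fun i ω => if X i ω = true then 1 else 0 with hR
  have hRmeas : ∀ i, Measurable (R i) := fun i =>
    (Measurable.of_discrete (f := fun b : Bool => if b = true then (1 : ℝ) else 0)).comp (hX i)
  have hindR : iIndepFun R μ :=
    hind.comp (fun _ b => if b = true then (1 : ℝ) else 0) fun _ => Measurable.of_discrete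
  set T : Ω → ℝ := ∑ i, R i with hT
  have hTapp : ∀ ω, T ω = ∑ i, R i ω := fun ω => by
    simp [hT, Finset.sum_apply]
  have hTle : ∀ ω, T ω ≤ N := by
    intro ω
    rw [hTapp]
    calc ∑ i, R i ω ≤ ∑ _i : Fin N, (1 : ℝ) :=
          Finset.sum_le_sum fun i _ => by by_cases h : X i ω = true <;> simp [hR, h]
      _ = N := by simp
  have hTmeas : Measurable T := by
    rw [hT]
    have := Finset.measurable_sum (f := R) Finset.univ (fun i _ => hRmeas i)
    convert this using 1
    funext ω; simp [Finset.sum_apply]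
  set l : ℝ := 4 * t with hl
  have hl0 : 0 ≤ l := by positivity
  have hint : Integrable (fun ω => Real.exp (l * T ω)) μ := by
    refine Integrable.mono' (integrable_const (Real.exp (l * N)))
      ((hTmeas.const_mul l).exp.aestronglyMeasurable) (ae_of_all _ fun ω => ?_)
    rw [Real.norm_eq_abs, abs_of_pos (Real.exp_pos _)]
    exact Real.exp_le_exp.mpr (mul_le_mul_of_nonneg_left (hTle ω) hl0)
  have hmgf : mgf T μ l = (1 - q + q * Real.exp l) ^ N := by
    rw [hT, hindR.mgf_sum hRmeas]
    rw [Finset.prod_congr rfl fun i _ => bernoulli_mgf μ (hX i) hq0 (hdist i) l]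
    simp
  have hcher := measure_ge_le_exp_mul_mgf (X := T) (μ := μ) ((N : ℝ) * (q + t)) hl0 hint
  have hEset : {ω | (N : ℝ) * (q + t) ≤ ∑ i, (if X i ω = true then (1 : ℝ) else 0)}
      = {ω | (N : ℝ) * (q + t) ≤ T ω} := by
    ext ω; simp only [Set.mem_setOf_eq, hTapp, hR]
  rw [hEset]
  have hbase_nonneg : 0 ≤ 1 - q + q * Real.exp l := by nlinarith [Real.exp_pos l]
  have hb : (1 - q + q * Real.exp l) ^ N ≤ Real.exp (q * l + l ^ 2 / 8) ^ N :=
    pow_le_pow_left₀ hbase_nonneg (hoeffding_core q l hq0 hq1 hl0) N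
  have hfinal : Real.exp (-l * ((N : ℝ) * (q + t))) * mgf T μ l
      ≤ Real.exp (-2 * N * t ^ 2) := by
    rw [hmgf]
    calc Real.exp (-l * ((N : ℝ) * (q + t))) * (1 - q + q * Real.exp l) ^ N
        ≤ Real.exp (-l * ((N : ℝ) * (q + t))) * Real.exp (q * l + l ^ 2 / 8) ^ N := by
          exact mul_le_mul_of_nonneg_left hb (Real.exp_pos _).le
      _ = Real.exp (-l * ((N : ℝ) * (q + t)) + N * (q * l + l ^ 2 / 8)) := by
          rw [← Real.exp_nat_mul, ← Real.exp_add]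
      _ = Real.exp (-2 * N * t ^ 2) := by
          congr 1
          rw [hl]; ring
  rw [ENNReal.le_ofReal_iff_toReal_le (measure_ne_top μ _) (Real.exp_pos _).le]
  exact hcher.trans hfinal

lemma binom_tail_lower (μ : Measure Ω) [IsProbabilityMeasure μ]
    {N : ℕ} {X : Fin N → Ω → Bool} (hX : ∀ i, Measurable (X i))
    (hind : iIndepFun X μ) {q : ℝ} (hq0 : 0 ≤ q) (hq1 : q ≤ 1)
    (hdist : ∀ i, μ {ω | X i ω = true} = ENNReal.ofReal q) {t : ℝ} (ht : 0 ≤ t) :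
    μ {ω | ∑ i, (if X i ω = true then (1 : ℝ) else 0) ≤ (N : ℝ) * (q - t)}
      ≤ ENNReal.ofReal (Real.exp (-2 * N * t ^ 2)) := by
  have hX' : ∀ i, Measurable (fun ω => !(X i ω)) := fun i =>
    (Measurable.of_discrete (f := fun b : Bool => !b)).comp (hX i)
  have hind' : iIndepFun (fun i ω => !(X i ω)) μ :=
    hind.comp (fun _ b => !b) fun _ => Measurable.of_discrete
  have hdist' : ∀ i, μ {ω | (!(X i ω)) = true} = ENNReal.ofReal (1 - q) := by
    intro i
    have hs : MeasurableSet {ω | X i ω = true} := hX i (measurableSet_singleton true)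
    have hset : {ω | (!(X i ω)) = true} = {ω | X i ω = true}ᶜ := by
      ext ω; cases h : X i ω <;> simp [h]
    rw [hset, prob_compl_eq_one_sub hs, hdist i,
      ← ENNReal.ofReal_one, ← ENNReal.ofReal_sub _ hq0]
  have key := binom_tail_upper μ (q := 1 - q) hX' hind' (by linarith) (by linarith) hdist' ht
  have hsum : ∀ ω, ∑ i, (if (!(X i ω)) = true then (1 : ℝ) else 0)
      = N - ∑ i, (if X i ω = true then (1 : ℝ) else 0) := by
    intro ω
    have : ∀ i : Fin N, (if (!(X i ω)) = true then (1 : ℝ) else 0)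
        = 1 - (if X i ω = true then (1 : ℝ) else 0) := by
      intro i; by_cases h : X i ω = true <;> simp [h]
    rw [Finset.sum_congr rfl fun i _ => this i, Finset.sum_sub_distrib]
    simp
  have hset : {ω | (N : ℝ) * (1 - q + t) ≤ ∑ i, (if (!(X i ω)) = true then (1 : ℝ) else 0)}
      = {ω | ∑ i, (if X i ω = true then (1 : ℝ) else 0) ≤ (N : ℝ) * (q - t)} := by
    ext ω
    simp only [Set.mem_setOf_eq, hsum ω]
    constructor <;> intro h <;> nlinarith [h]
  rw [← hset]
  exact key

lemma binom_tail_abs (μ : Measure Ω) [IsProbabilityMeasure μ]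
    {N : ℕ} (hN : 0 < N) {X : Fin N → Ω → Bool} (hX : ∀ i, Measurable (X i))
    (hind : iIndepFun X μ) {q : ℝ} (hq0 : 0 ≤ q) (hq1 : q ≤ 1)
    (hdist : ∀ i, μ {ω | X i ω = true} = ENNReal.ofReal q) {t : ℝ} (ht : 0 ≤ t) :
    μ {ω | t ≤ |((Finset.univ.filter fun i => X i ω = true).card : ℝ) / N - q|}
      ≤ ENNReal.ofReal (Real.exp (-2 * N * t ^ 2)) + ENNReal.ofReal (Real.exp (-2 * N * t ^ 2)) := by
  have hNpos : (0 : ℝ) < N := Nat.cast_pos.mpr hN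
  have hsub : {ω | t ≤ |((Finset.univ.filter fun i => X i ω = true).card : ℝ) / N - q|}
      ⊆ {ω | (N : ℝ) * (q + t) ≤ ∑ i, (if X i ω = true then (1 : ℝ) else 0)}
        ∪ {ω | ∑ i, (if X i ω = true then (1 : ℝ) else 0) ≤ (N : ℝ) * (q - t)} := by
    intro ω hω
    simp only [Set.mem_setOf_eq] at hω
    have hcard : (∑ i, (if X i ω = true then (1 : ℝ) else 0))
        = ((Finset.univ.filter fun i => X i ω = true).card : ℝ) := by
      rw [Finset.sum_boole]
    rcases le_abs.mp hω with h | h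
    · left
      simp only [Set.mem_setOf_eq, hcard]
      have h2 := (le_div_iff₀ hNpos).mp (by linarith :
        q + t ≤ ((Finset.univ.filter fun i => X i ω = true).card : ℝ) / N)
      nlinarith [h2]
    · right
      simp only [Set.mem_setOf_eq, hcard]
      have : ((Finset.univ.filter fun i => X i ω = true).card : ℝ) / N ≤ q - t := by
        linarith
      calc ((Finset.univ.filter fun i => X i ω = true).card : ℝ)
          = (((Finset.univ.filter fun i => X i ω = true).card : ℝ) / N) * N := by
            field_simp
        _ ≤ (q - t) * N := mul_le_mul_of_nonneg_right this hNpos.le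
        _ = (N : ℝ) * (q - t) := by ring
  calc μ _ ≤ μ ({ω | (N : ℝ) * (q + t) ≤ ∑ i, (if X i ω = true then (1 : ℝ) else 0)}
        ∪ {ω | ∑ i, (if X i ω = true then (1 : ℝ) else 0) ≤ (N : ℝ) * (q - t)}) :=
        measure_mono hsub
    _ ≤ _ := (measure_union_le _ _).trans (add_le_add
        (binom_tail_upper μ hX hind hq0 hq1 hdist ht)
        (binom_tail_lower μ hX hind hq0 hq1 hdist ht))

lemma ratio_perturb {u v u' v' Δ : ℝ} (hu : 0 ≤ u) (hv : 0 ≤ v) (hu' : 0 ≤ u') (hv' : 0 ≤ v')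
    (hd : 0 < u + v) (h : |u' - u| + |v' - v| ≤ Δ) (hΔ : Δ ≤ (u + v) / 4) :
    |u' / (u' + v') - u / (u + v)| ≤ 4 / 3 * Δ / (u + v) := by
  have hΔ0 : 0 ≤ Δ := le_trans (by positivity) h
  have h1 : u - u' ≤ |u' - u| := by rw [abs_sub_comm]; exact le_abs_self _
  have h2 : v - v' ≤ |v' - v| := by rw [abs_sub_comm]; exact le_abs_self _
  have hd' : 3 / 4 * (u + v) ≤ u' + v' := by linarith
  have hd'pos : 0 < u' + v' := lt_of_lt_of_le (by linarith) hd'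
  rw [div_sub_div _ _ hd'pos.ne' hd.ne', abs_div, abs_of_pos (mul_pos hd'pos hd)]
  have hnum : |u' * (u + v) - (u' + v') * u| ≤ Δ * (u + v) := by
    have heq : u' * (u + v) - (u' + v') * u = (u' - u) * v - u * (v' - v) := by ring
    rw [heq]
    calc |(u' - u) * v - u * (v' - v)| ≤ |(u' - u) * v| + |u * (v' - v)| := abs_sub _ _
      _ = |u' - u| * v + u * |v' - v| := by
          rw [abs_mul, abs_mul, abs_of_nonneg hv, abs_of_nonneg hu]
      _ ≤ Δ * (u + v) := by
          nlinarith [abs_nonneg (u' - u), abs_nonneg (v' - v)]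
  rw [div_le_div_iff₀ (mul_pos hd'pos hd) hd]
  calc |u' * (u + v) - (u' + v') * u| * (u + v) ≤ (Δ * (u + v)) * (u + v) :=
        mul_le_mul_of_nonneg_right hnum hd.le
    _ ≤ 4 / 3 * Δ * ((u' + v') * (u + v)) := by
        nlinarith [mul_le_mul_of_nonneg_left hd'
          (by positivity : (0:ℝ) ≤ 4 / 3 * Δ * (u + v))]
  
lemma combine_bound {d1 d2 d3 d4 dS c S' ε : ℝ}
    (h1 : |d1| ≤ ε / 3) (h2 : |d2| ≤ ε / 3) (h3 : |d3| ≤ ε / 3) (h4 : |d4| ≤ ε / 3)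
    (hS : |dS| ≤ ε / 8) (hc : |c| ≤ 2) (h0 : 0 ≤ S') (hS1 : S' ≤ 1) :
    |d1 * S' + d2 * (1 - S') - d3 * S' - d4 * (1 - S') + dS * c| ≤ 11 / 12 * ε := by
  have hε : 0 ≤ ε := by nlinarith [abs_nonneg d1]
  obtain ⟨h1a, h1b⟩ := abs_le.mp h1
  obtain ⟨h2a, h2b⟩ := abs_le.mp h2
  obtain ⟨h3a, h3b⟩ := abs_le.mp h3
  obtain ⟨h4a, h4b⟩ := abs_le.mp h4
  have hdc : |dS * c| ≤ ε / 4 := by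
    rw [abs_mul]
    calc |dS| * |c| ≤ ε / 8 * 2 := mul_le_mul hS hc (abs_nonneg c) (by linarith)
      _ = ε / 4 := by ring
  obtain ⟨hdca, hdcb⟩ := abs_le.mp hdc
  have hS'c : 0 ≤ 1 - S' := by linarith
  rw [abs_le]
  constructor <;>
    nlinarith [mul_le_mul_of_nonneg_right h1b h0, mul_le_mul_of_nonneg_right h1a h0,
      mul_le_mul_of_nonneg_right h2b hS'c, mul_le_mul_of_nonneg_right h2a hS'c,
      mul_le_mul_of_nonneg_right h3b h0, mul_le_mul_of_nonneg_right h3a h0,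
      mul_le_mul_of_nonneg_right h4b hS'c, mul_le_mul_of_nonneg_right h4a hS'c]

set_option maxHeartbeats 1000000 in
lemma det_bound (a qa qb : Fin 4 → ℝ) {ε : ℝ} (hε0 : 0 < ε) (hε1 : ε ≤ 1)
    (ha : ∀ j, 0 ≤ a j) (hasum : ∑ j, a j = 1)
    (hqa0 : ∀ j, 0 ≤ qa j) (hqa1 : ∀ j, qa j ≤ 1)
    (hqb0 : ∀ j, 0 ≤ qb j) (hqb1 : ∀ j, qb j ≤ 1)
    (h37 : 0 < a 1 * qa 1 + a 3 * qa 3)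
    (h48 : 0 < a 1 * (1 - qa 1) + a 3 * (1 - qa 3))
    (h15 : 0 < a 0 * qa 0 + a 2 * qa 2)
    (h26 : 0 < a 0 * (1 - qa 0) + a 2 * (1 - qa 2))
    (hA : a 1 * |qb 1 - qa 1| + a 3 * |qb 3 - qa 3| ≤
      ε / 4 * min (a 1 * qa 1 + a 3 * qa 3) (a 1 * (1 - qa 1) + a 3 * (1 - qa 3)))
    (hB : a 0 * |qb 0 - qa 0| + a 2 * |qb 2 - qa 2| ≤
      ε / 4 * min (a 0 * qa 0 + a 2 * qa 2) (a 0 * (1 - qa 0) + a 2 * (1 - qa 2))) :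
    |ATE (pOf a qb) - ATE (pOf a qa)| ≤ 11 / 12 * ε := by
  have habs : ∀ (c x y : ℝ), 0 ≤ c → |c * x - c * y| = c * |x - y| := by
    intro c x y hc; rw [← mul_sub, abs_mul, abs_of_nonneg hc]
  -- generic ε/3 bound for a perturbed conditional probability
  have keyr : ∀ u v u' v' D : ℝ, 0 ≤ u → 0 ≤ v → 0 ≤ u' → 0 ≤ v' → 0 < u + v →
      D ≤ u + v → 0 ≤ D → (|u' - u| + |v' - v| ≤ ε / 4 * D) →
      |u' / (u' + v') - u / (u + v)| ≤ ε / 3 := by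
    intro u v u' v' D hu hv hu' hv' hd hD hD0 hΔ
    have hΔ' : |u' - u| + |v' - v| ≤ ε / 4 * (u + v) := le_trans hΔ (by nlinarith)
    have h4 : ε / 4 * (u + v) ≤ (u + v) / 4 := by nlinarith
    have hrp := ratio_perturb hu hv hu' hv' hd hΔ' h4
    have heq : 4 / 3 * (ε / 4 * (u + v)) / (u + v) = ε / 3 := by
      field_simp
    rw [heq] at hrp
    exact hrp
  -- the four perturbation bounds
  have hmin13a : min (a 1 * qa 1 + a 3 * qa 3) (a 1 * (1 - qa 1) + a 3 * (1 - qa 3))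
      ≤ a 3 * qa 3 + a 1 * qa 1 := le_trans (min_le_left _ _) (by linarith)
  have hmin13b : min (a 1 * qa 1 + a 3 * qa 3) (a 1 * (1 - qa 1) + a 3 * (1 - qa 3))
      ≤ a 3 * (1 - qa 3) + a 1 * (1 - qa 1) := le_trans (min_le_right _ _) (by linarith)
  have hmin02a : min (a 0 * qa 0 + a 2 * qa 2) (a 0 * (1 - qa 0) + a 2 * (1 - qa 2))
      ≤ a 2 * qa 2 + a 0 * qa 0 := le_trans (min_le_left _ _) (by linarith)
  have hmin02b : min (a 0 * qa 0 + a 2 * qa 2) (a 0 * (1 - qa 0) + a 2 * (1 - qa 2))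
      ≤ a 2 * (1 - qa 2) + a 0 * (1 - qa 0) := le_trans (min_le_right _ _) (by linarith)
  have hmin13nn : 0 ≤ min (a 1 * qa 1 + a 3 * qa 3) (a 1 * (1 - qa 1) + a 3 * (1 - qa 3)) :=
    le_min (by positivity) (by
      have h1 : 0 ≤ a 1 * (1 - qa 1) := mul_nonneg (ha 1) (by linarith [hqa1 1])
      have h3 : 0 ≤ a 3 * (1 - qa 3) := mul_nonneg (ha 3) (by linarith [hqa1 3])
      linarith)
  have hmin02nn : 0 ≤ min (a 0 * qa 0 + a 2 * qa 2) (a 0 * (1 - qa 0) + a 2 * (1 - qa 2)) :=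
    le_min (by positivity) (by
      have h1 : 0 ≤ a 0 * (1 - qa 0) := mul_nonneg (ha 0) (by linarith [hqa1 0])
      have h3 : 0 ≤ a 2 * (1 - qa 2) := mul_nonneg (ha 2) (by linarith [hqa1 2])
      linarith)
  have hq1 : ∀ j, 0 ≤ 1 - qa j := fun j => by linarith [hqa1 j]
  have hq1' : ∀ j, 0 ≤ 1 - qb j := fun j => by linarith [hqb1 j]
  have e1 : |a 3 * qb 3 / (a 3 * qb 3 + a 1 * qb 1)
      - a 3 * qa 3 / (a 3 * qa 3 + a 1 * qa 1)| ≤ ε / 3 := by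
    refine keyr _ _ _ _ _ (mul_nonneg (ha 3) (hqa0 3)) (mul_nonneg (ha 1) (hqa0 1))
      (mul_nonneg (ha 3) (hqb0 3)) (mul_nonneg (ha 1) (hqb0 1))
      (by linarith) hmin13a hmin13nn ?_
    rw [habs _ _ _ (ha 3), habs _ _ _ (ha 1)]
    exact le_trans (by linarith) hA
  have e2 : |a 3 * (1 - qb 3) / (a 3 * (1 - qb 3) + a 1 * (1 - qb 1))
      - a 3 * (1 - qa 3) / (a 3 * (1 - qa 3) + a 1 * (1 - qa 1))| ≤ ε / 3 := by
    refine keyr _ _ _ _ _ (mul_nonneg (ha 3) (hq1 3)) (mul_nonneg (ha 1) (hq1 1))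
      (mul_nonneg (ha 3) (hq1' 3)) (mul_nonneg (ha 1) (hq1' 1))
      (by linarith) hmin13b hmin13nn ?_
    rw [habs _ _ _ (ha 3), habs _ _ _ (ha 1)]
    have h3 : |(1 - qb 3) - (1 - qa 3)| = |qb 3 - qa 3| := by
      rw [show (1 - qb 3) - (1 - qa 3) = -(qb 3 - qa 3) by ring, abs_neg]
    have h1 : |(1 - qb 1) - (1 - qa 1)| = |qb 1 - qa 1| := by
      rw [show (1 - qb 1) - (1 - qa 1) = -(qb 1 - qa 1) by ring, abs_neg]
    rw [h3, h1]
    exact le_trans (by linarith) hA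
  have e3 : |a 2 * qb 2 / (a 2 * qb 2 + a 0 * qb 0)
      - a 2 * qa 2 / (a 2 * qa 2 + a 0 * qa 0)| ≤ ε / 3 := by
    refine keyr _ _ _ _ _ (mul_nonneg (ha 2) (hqa0 2)) (mul_nonneg (ha 0) (hqa0 0))
      (mul_nonneg (ha 2) (hqb0 2)) (mul_nonneg (ha 0) (hqb0 0))
      (by linarith) hmin02a hmin02nn ?_
    rw [habs _ _ _ (ha 2), habs _ _ _ (ha 0)]
    exact le_trans (by linarith) hB
  have e4 : |a 2 * (1 - qb 2) / (a 2 * (1 - qb 2) + a 0 * (1 - qb 0))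
      - a 2 * (1 - qa 2) / (a 2 * (1 - qa 2) + a 0 * (1 - qa 0))| ≤ ε / 3 := by
    refine keyr _ _ _ _ _ (mul_nonneg (ha 2) (hq1 2)) (mul_nonneg (ha 0) (hq1 0))
      (mul_nonneg (ha 2) (hq1' 2)) (mul_nonneg (ha 0) (hq1' 0))
      (by linarith) hmin02b hmin02nn ?_
    rw [habs _ _ _ (ha 2), habs _ _ _ (ha 0)]
    have h3 : |(1 - qb 2) - (1 - qa 2)| = |qb 2 - qa 2| := by
      rw [show (1 - qb 2) - (1 - qa 2) = -(qb 2 - qa 2) by ring, abs_neg]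
    have h1 : |(1 - qb 0) - (1 - qa 0)| = |qb 0 - qa 0| := by
      rw [show (1 - qb 0) - (1 - qa 0) = -(qb 0 - qa 0) by ring, abs_neg]
    rw [h3, h1]
    exact le_trans (by linarith) hB
  -- sum bounds
  have hsum4 : a 0 + a 1 + a 2 + a 3 = 1 := by
    have := hasum; rwa [Fin.sum_univ_four] at this
  have hSS : |(a 0 * qb 0 + a 1 * qb 1 + a 2 * qb 2 + a 3 * qb 3)
      - (a 0 * qa 0 + a 1 * qa 1 + a 2 * qa 2 + a 3 * qa 3)| ≤ ε / 8 := by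
    have htri : |(a 0 * qb 0 + a 1 * qb 1 + a 2 * qb 2 + a 3 * qb 3)
        - (a 0 * qa 0 + a 1 * qa 1 + a 2 * qa 2 + a 3 * qa 3)|
        ≤ a 0 * |qb 0 - qa 0| + a 1 * |qb 1 - qa 1| + a 2 * |qb 2 - qa 2|
          + a 3 * |qb 3 - qa 3| := by
      have h0 := habs (a 0) (qb 0) (qa 0) (ha 0)
      have h1 := habs (a 1) (qb 1) (qa 1) (ha 1)
      have h2 := habs (a 2) (qb 2) (qa 2) (ha 2)
      have h3 := habs (a 3) (qb 3) (qa 3) (ha 3)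
      calc |(a 0 * qb 0 + a 1 * qb 1 + a 2 * qb 2 + a 3 * qb 3)
          - (a 0 * qa 0 + a 1 * qa 1 + a 2 * qa 2 + a 3 * qa 3)|
          = |((a 0 * qb 0 - a 0 * qa 0) + (a 1 * qb 1 - a 1 * qa 1))
            + ((a 2 * qb 2 - a 2 * qa 2) + (a 3 * qb 3 - a 3 * qa 3))| := by ring_nf
        _ ≤ |(a 0 * qb 0 - a 0 * qa 0) + (a 1 * qb 1 - a 1 * qa 1)|
            + |(a 2 * qb 2 - a 2 * qa 2) + (a 3 * qb 3 - a 3 * qa 3)| := abs_add_le _ _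
        _ ≤ (|a 0 * qb 0 - a 0 * qa 0| + |a 1 * qb 1 - a 1 * qa 1|)
            + (|a 2 * qb 2 - a 2 * qa 2| + |a 3 * qb 3 - a 3 * qa 3|) :=
            add_le_add (abs_add_le _ _) (abs_add_le _ _)
        _ = a 0 * |qb 0 - qa 0| + a 1 * |qb 1 - qa 1| + a 2 * |qb 2 - qa 2|
            + a 3 * |qb 3 - qa 3| := by rw [h0, h1, h2, h3]; ring
    have hm13 : min (a 1 * qa 1 + a 3 * qa 3) (a 1 * (1 - qa 1) + a 3 * (1 - qa 3))
        ≤ (a 1 + a 3) / 2 := by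
      cases' le_total (a 1 * qa 1 + a 3 * qa 3) (a 1 * (1 - qa 1) + a 3 * (1 - qa 3)) with h h
      · rw [min_eq_left h]; linarith
      · rw [min_eq_right h]; linarith
    have hm02 : min (a 0 * qa 0 + a 2 * qa 2) (a 0 * (1 - qa 0) + a 2 * (1 - qa 2))
        ≤ (a 0 + a 2) / 2 := by
      cases' le_total (a 0 * qa 0 + a 2 * qa 2) (a 0 * (1 - qa 0) + a 2 * (1 - qa 2)) with h h
      · rw [min_eq_left h]; linarith
      · rw [min_eq_right h]; linarith
    calc |(a 0 * qb 0 + a 1 * qb 1 + a 2 * qb 2 + a 3 * qb 3)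
        - (a 0 * qa 0 + a 1 * qa 1 + a 2 * qa 2 + a 3 * qa 3)|
        ≤ a 0 * |qb 0 - qa 0| + a 1 * |qb 1 - qa 1| + a 2 * |qb 2 - qa 2|
          + a 3 * |qb 3 - qa 3| := htri
      _ ≤ ε / 4 * ((a 1 + a 3) / 2) + ε / 4 * ((a 0 + a 2) / 2) := by
          have hA' := le_trans hA
            (mul_le_mul_of_nonneg_left hm13 (by positivity : (0:ℝ) ≤ ε / 4))
          have hB' := le_trans hB
            (mul_le_mul_of_nonneg_left hm02 (by positivity : (0:ℝ) ≤ ε / 4))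
          linarith
      _ = ε / 8 * (a 0 + a 1 + a 2 + a 3) := by ring
      _ = ε / 8 := by rw [hsum4, mul_one]
  -- r values in [0,1]
  have hr : ∀ u v : ℝ, 0 ≤ u → 0 ≤ v → 0 < u + v → 0 ≤ u / (u + v) ∧ u / (u + v) ≤ 1 := by
    intro u v hu hv hd
    constructor
    · positivity
    · rw [div_le_one hd]; linarith
  have hr1 := hr (a 3 * qa 3) (a 1 * qa 1) (mul_nonneg (ha 3) (hqa0 3))
    (mul_nonneg (ha 1) (hqa0 1)) (by linarith)
  have hr2 := hr (a 3 * (1 - qa 3)) (a 1 * (1 - qa 1)) (mul_nonneg (ha 3) (hq1 3))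
    (mul_nonneg (ha 1) (hq1 1)) (by linarith)
  have hr3 := hr (a 2 * qa 2) (a 0 * qa 0) (mul_nonneg (ha 2) (hqa0 2))
    (mul_nonneg (ha 0) (hqa0 0)) (by linarith)
  have hr4 := hr (a 2 * (1 - qa 2)) (a 0 * (1 - qa 0)) (mul_nonneg (ha 2) (hq1 2))
    (mul_nonneg (ha 0) (hq1 0)) (by linarith)
  have hc : |a 3 * qa 3 / (a 3 * qa 3 + a 1 * qa 1)
      - a 3 * (1 - qa 3) / (a 3 * (1 - qa 3) + a 1 * (1 - qa 1))
      - (a 2 * qa 2 / (a 2 * qa 2 + a 0 * qa 0)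
        - a 2 * (1 - qa 2) / (a 2 * (1 - qa 2) + a 0 * (1 - qa 0)))| ≤ 2 := by
    rw [abs_le]
    constructor <;> [skip; skip] <;>
      · obtain ⟨h1a, h1b⟩ := hr1; obtain ⟨h2a, h2b⟩ := hr2
        obtain ⟨h3a, h3b⟩ := hr3; obtain ⟨h4a, h4b⟩ := hr4
        linarith
  -- S' in [0,1]
  have hS'0 : 0 ≤ a 0 * qb 0 + a 1 * qb 1 + a 2 * qb 2 + a 3 * qb 3 := by
    have h0 := mul_nonneg (ha 0) (hqb0 0); have h1 := mul_nonneg (ha 1) (hqb0 1)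
    have h2 := mul_nonneg (ha 2) (hqb0 2); have h3 := mul_nonneg (ha 3) (hqb0 3)
    linarith
  have hS'1 : a 0 * qb 0 + a 1 * qb 1 + a 2 * qb 2 + a 3 * qb 3 ≤ 1 := by
    have h0 : a 0 * qb 0 ≤ a 0 := by nlinarith [hqb1 0, ha 0]
    have h1 : a 1 * qb 1 ≤ a 1 := by nlinarith [hqb1 1, ha 1]
    have h2 : a 2 * qb 2 ≤ a 2 := by nlinarith [hqb1 2, ha 2]
    have h3 : a 3 * qb 3 ≤ a 3 := by nlinarith [hqb1 3, ha 3]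
    linarith
  -- decomposition
  have hATEb : ATE (pOf a qb) =
      a 3 * qb 3 * (a 0 * qb 0 + a 1 * qb 1 + a 2 * qb 2 + a 3 * qb 3)
        / (a 3 * qb 3 + a 1 * qb 1)
      + a 3 * (1 - qb 3) * (1 - (a 0 * qb 0) - (a 1 * qb 1) - (a 2 * qb 2) - (a 3 * qb 3))
        / (a 3 * (1 - qb 3) + a 1 * (1 - qb 1))
      - a 2 * qb 2 * (a 0 * qb 0 + a 1 * qb 1 + a 2 * qb 2 + a 3 * qb 3)
        / (a 2 * qb 2 + a 0 * qb 0)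
      - a 2 * (1 - qb 2) * (1 - (a 0 * qb 0) - (a 1 * qb 1) - (a 2 * qb 2) - (a 3 * qb 3))
        / (a 2 * (1 - qb 2) + a 0 * (1 - qb 0)) := rfl
  have hATEa : ATE (pOf a qa) =
      a 3 * qa 3 * (a 0 * qa 0 + a 1 * qa 1 + a 2 * qa 2 + a 3 * qa 3)
        / (a 3 * qa 3 + a 1 * qa 1)
      + a 3 * (1 - qa 3) * (1 - (a 0 * qa 0) - (a 1 * qa 1) - (a 2 * qa 2) - (a 3 * qa 3))
        / (a 3 * (1 - qa 3) + a 1 * (1 - qa 1))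
      - a 2 * qa 2 * (a 0 * qa 0 + a 1 * qa 1 + a 2 * qa 2 + a 3 * qa 3)
        / (a 2 * qa 2 + a 0 * qa 0)
      - a 2 * (1 - qa 2) * (1 - (a 0 * qa 0) - (a 1 * qa 1) - (a 2 * qa 2) - (a 3 * qa 3))
        / (a 2 * (1 - qa 2) + a 0 * (1 - qa 0)) := rfl
  have hdecomp : ATE (pOf a qb) - ATE (pOf a qa) =
      (a 3 * qb 3 / (a 3 * qb 3 + a 1 * qb 1)
        - a 3 * qa 3 / (a 3 * qa 3 + a 1 * qa 1))
        * (a 0 * qb 0 + a 1 * qb 1 + a 2 * qb 2 + a 3 * qb 3)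
      + (a 3 * (1 - qb 3) / (a 3 * (1 - qb 3) + a 1 * (1 - qb 1))
        - a 3 * (1 - qa 3) / (a 3 * (1 - qa 3) + a 1 * (1 - qa 1)))
        * (1 - (a 0 * qb 0 + a 1 * qb 1 + a 2 * qb 2 + a 3 * qb 3))
      - (a 2 * qb 2 / (a 2 * qb 2 + a 0 * qb 0)
        - a 2 * qa 2 / (a 2 * qa 2 + a 0 * qa 0))
        * (a 0 * qb 0 + a 1 * qb 1 + a 2 * qb 2 + a 3 * qb 3)
      - (a 2 * (1 - qb 2) / (a 2 * (1 - qb 2) + a 0 * (1 - qb 0))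
        - a 2 * (1 - qa 2) / (a 2 * (1 - qa 2) + a 0 * (1 - qa 0)))
        * (1 - (a 0 * qb 0 + a 1 * qb 1 + a 2 * qb 2 + a 3 * qb 3))
      + ((a 0 * qb 0 + a 1 * qb 1 + a 2 * qb 2 + a 3 * qb 3)
        - (a 0 * qa 0 + a 1 * qa 1 + a 2 * qa 2 + a 3 * qa 3))
        * (a 3 * qa 3 / (a 3 * qa 3 + a 1 * qa 1)
          - a 3 * (1 - qa 3) / (a 3 * (1 - qa 3) + a 1 * (1 - qa 1))
          - (a 2 * qa 2 / (a 2 * qa 2 + a 0 * qa 0)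
            - a 2 * (1 - qa 2) / (a 2 * (1 - qa 2) + a 0 * (1 - qa 0)))) := by
    rw [hATEb, hATEa]
    ring
  rw [hdecomp]
  exact combine_bound e1 e2 e3 e4 hSS hc hS'0 hS'1

lemma group_sqrt_bound {a1 a3 n1 n3 m L D ε : ℝ} (ha1 : 0 < a1) (ha3 : 0 < a3)
    (hn1 : 0 < n1) (hn3 : 0 < n3) (hm : 0 < m) (hL : 0 ≤ L) (hD : 0 < D) (hε : 0 < ε)
    (halloc1 : n1 = a1 / (2 * (a1 + a3)) * m) (halloc3 : n3 = a3 / (2 * (a1 + a3)) * m)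
    (hM : 36 * L * (a1 + a3) ^ 2 ≤ m * (ε ^ 2 * D ^ 2)) :
    a1 * Real.sqrt (9 * L / (16 * n1)) + a3 * Real.sqrt (9 * L / (16 * n3)) ≤ ε / 4 * D := by
  have ha13 : 0 < a1 + a3 := by linarith
  have hx1 : (0:ℝ) ≤ 9 * L / (16 * n1) := by positivity
  have hx3 : (0:ℝ) ≤ 9 * L / (16 * n3) := by positivity
  set s := a1 * Real.sqrt (9 * L / (16 * n1)) + a3 * Real.sqrt (9 * L / (16 * n3)) with hs
  have hs0 : 0 ≤ s := by positivity
  have hsq1 : (a1 * Real.sqrt (9 * L / (16 * n1))) ^ 2 = a1 ^ 2 * (9 * L / (16 * n1)) := by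
    rw [mul_pow, Real.sq_sqrt hx1]
  have hsq3 : (a3 * Real.sqrt (9 * L / (16 * n3))) ^ 2 = a3 ^ 2 * (9 * L / (16 * n3)) := by
    rw [mul_pow, Real.sq_sqrt hx3]
  have hratio1 : a1 ^ 2 / n1 = 2 * a1 * (a1 + a3) / m := by
    rw [halloc1]; field_simp
  have hratio3 : a3 ^ 2 / n3 = 2 * a3 * (a1 + a3) / m := by
    rw [halloc3]; field_simp
  have hs2 : s ^ 2 ≤ 2 * (a1 ^ 2 * (9 * L / (16 * n1)) + a3 ^ 2 * (9 * L / (16 * n3))) := by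
    have h := sq_nonneg (a1 * Real.sqrt (9 * L / (16 * n1)) - a3 * Real.sqrt (9 * L / (16 * n3)))
    nlinarith [hsq1, hsq3]
  have hval : 2 * (a1 ^ 2 * (9 * L / (16 * n1)) + a3 ^ 2 * (9 * L / (16 * n3)))
      = 9 / 8 * L * ((a1 ^ 2 / n1) + (a3 ^ 2 / n3)) := by ring
  have hval2 : (a1 ^ 2 / n1) + (a3 ^ 2 / n3) = 2 * (a1 + a3) ^ 2 / m := by
    rw [hratio1, hratio3]; field_simp
  have hs2' : s ^ 2 ≤ 9 / 4 * L * (a1 + a3) ^ 2 / m := by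
    rw [hval, hval2] at hs2
    calc s ^ 2 ≤ 9 / 8 * L * (2 * (a1 + a3) ^ 2 / m) := hs2
      _ = 9 / 4 * L * (a1 + a3) ^ 2 / m := by ring
  have hfin : s ^ 2 ≤ (ε / 4 * D) ^ 2 := by
    have h1 : 9 / 4 * L * (a1 + a3) ^ 2 / m ≤ ε ^ 2 * D ^ 2 / 16 := by
      rw [div_le_div_iff₀ hm (by norm_num : (0:ℝ) < 16)]
      nlinarith [hM]
    calc s ^ 2 ≤ 9 / 4 * L * (a1 + a3) ^ 2 / m := hs2'
      _ ≤ ε ^ 2 * D ^ 2 / 16 := h1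
      _ = (ε / 4 * D) ^ 2 := by ring
  calc s = Real.sqrt (s ^ 2) := (Real.sqrt_sq hs0).symm
    _ ≤ Real.sqrt ((ε / 4 * D) ^ 2) := Real.sqrt_le_sqrt hfin
    _ = ε / 4 * D := Real.sqrt_sq (by positivity)


end AteAux

set_option maxHeartbeats 4000000 in
/-- Sample complexity for estimating the ATE with infinite observational data,
sampling the experimental data according to the predefined ratio
`(x_1,x_2,x_3,x_4) = (a_1/(2(a_1+a_3)), a_2/(2(a_2+a_4)), a_3/(2(a_1+a_3)),
a_4/(2(a_2+a_4)))` (Theorem 2, third bullet). -/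
theorem ate_sample_complexity_sampling_by_ratio
    {Ω : Type*} [MeasurableSpace Ω] (μ : Measure Ω) [IsProbabilityMeasure μ]
    (a q : Fin 4 → ℝ) (ha : ∀ j, 0 ≤ a j) (hasum : ∑ j, a j = 1)
    (hq0 : ∀ j, 0 ≤ q j) (hq1 : ∀ j, q j ≤ 1)
    (ha13 : 0 < a 0 + a 2) (ha24 : 0 < a 1 + a 3)
    (m : ℕ) (n : Fin 4 → ℕ) (hn : ∀ j, 0 < n j)
    -- allocation according to the predefined ratio
    (halloc1 : (n 0 : ℝ) = a 0 / (2 * (a 0 + a 2)) * m)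
    (halloc2 : (n 1 : ℝ) = a 1 / (2 * (a 1 + a 3)) * m)
    (halloc3 : (n 2 : ℝ) = a 2 / (2 * (a 0 + a 2)) * m)
    (halloc4 : (n 3 : ℝ) = a 3 / (2 * (a 1 + a 3)) * m)
    (W : (j : Fin 4) → Fin (n j) → Ω → Bool)
    (hWmeas : ∀ j i, Measurable (W j i))
    (hindep : iIndepFun
      (fun k : Σ j : Fin 4, Fin (n j) => W k.1 k.2) μ)
    (hdist : ∀ j i, μ {ω | W j i ω = true} = ENNReal.ofReal (q j))
    (ε δ : ℝ) (hε0 : 0 < ε) (hε1 : ε ≤ 1) (hδ0 : 0 < δ) (hδ1 : δ < 1)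
    (h37 : 0 < pOf a q 2 + pOf a q 6) (h48 : 0 < pOf a q 3 + pOf a q 7)
    (h15 : 0 < pOf a q 0 + pOf a q 4) (h26 : 0 < pOf a q 1 + pOf a q 5)
    (hm : (m : ℝ) ≥ 18 * Real.log (8 / δ) / ε ^ 2 *
      max (2 * (a 1 + a 3) ^ 2 /
            min ((pOf a q 2 + pOf a q 6) ^ 2) ((pOf a q 3 + pOf a q 7) ^ 2))
          (2 * (a 0 + a 2) ^ 2 /
            min ((pOf a q 0 + pOf a q 4) ^ 2) ((pOf a q 1 + pOf a q 5) ^ 2))) :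
    μ {ω | ε ≤
        |ATE (pOf a (fun j =>
            ((Finset.univ.filter fun i => W j i ω = true).card : ℝ) / n j)) -
          ATE (pOf a q)|}
      < ENNReal.ofReal δ := by
  classical
  -- m and a j are positive
  have hm0 : 0 < m := by
    rcases Nat.eq_zero_or_pos m with h | h
    · exfalso
      have h0 := halloc1
      rw [h] at h0
      simp only [Nat.cast_zero, mul_zero] at h0
      exact absurd (Nat.cast_eq_zero.mp h0) (hn 0).ne'
    · exact h
  have key0 : ∀ (j : Fin 4) (c : ℝ), (n j : ℝ) = a j / c * m → a j ≠ 0 := by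
    intro j c hj h0
    rw [h0] at hj
    simp only [zero_div, zero_mul] at hj
    exact absurd (Nat.cast_eq_zero.mp hj) (hn j).ne'
  have ha0 : 0 < a 0 := lt_of_le_of_ne (ha 0) (Ne.symm (key0 0 _ halloc1))
  have ha1 : 0 < a 1 := lt_of_le_of_ne (ha 1) (Ne.symm (key0 1 _ halloc2))
  have ha2 : 0 < a 2 := lt_of_le_of_ne (ha 2) (Ne.symm (key0 2 _ halloc3))
  have ha3 : 0 < a 3 := lt_of_le_of_ne (ha 3) (Ne.symm (key0 3 _ halloc4))
  -- normalize the pOf expressions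
  have hp04 : pOf a q 0 + pOf a q 4 = a 0 * q 0 + a 2 * q 2 := rfl
  have hp15 : pOf a q 1 + pOf a q 5 = a 0 * (1 - q 0) + a 2 * (1 - q 2) := rfl
  have hp26 : pOf a q 2 + pOf a q 6 = a 1 * q 1 + a 3 * q 3 := rfl
  have hp37 : pOf a q 3 + pOf a q 7 = a 1 * (1 - q 1) + a 3 * (1 - q 3) := rfl
  rw [hp26] at h37
  rw [hp37] at h48
  rw [hp04] at h15
  rw [hp15] at h26
  rw [hp04, hp15, hp26, hp37] at hm
  have hminsq : ∀ x y : ℝ, 0 ≤ x → 0 ≤ y → min (x ^ 2) (y ^ 2) = (min x y) ^ 2 := by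
    intro x y hx hy
    rcases le_total x y with h | h
    · rw [min_eq_left h, min_eq_left (by nlinarith)]
    · rw [min_eq_right h, min_eq_right (by nlinarith)]
  rw [hminsq _ _ h37.le h48.le, hminsq _ _ h15.le h26.le] at hm
  set L := Real.log (8 / δ) with hL_def
  have hL : 0 < L := Real.log_pos (by rw [lt_div_iff₀ hδ0]; linarith)
  set D13 := min (a 1 * q 1 + a 3 * q 3) (a 1 * (1 - q 1) + a 3 * (1 - q 3)) with hD13
  set D02 := min (a 0 * q 0 + a 2 * q 2) (a 0 * (1 - q 0) + a 2 * (1 - q 2)) with hD02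
  have hD13pos : 0 < D13 := lt_min h37 h48
  have hD02pos : 0 < D02 := lt_min h15 h26
  have coef_nonneg : 0 ≤ 18 * L / ε ^ 2 := by positivity
  have hmax1 : 18 * L / ε ^ 2 * (2 * (a 1 + a 3) ^ 2 / D13 ^ 2) ≤ (m : ℝ) :=
    le_trans (mul_le_mul_of_nonneg_left (le_max_left _ _) coef_nonneg) hm
  have hmax2 : 18 * L / ε ^ 2 * (2 * (a 0 + a 2) ^ 2 / D02 ^ 2) ≤ (m : ℝ) :=
    le_trans (mul_le_mul_of_nonneg_left (le_max_right _ _) coef_nonneg) hm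
  have hM13 : 36 * L * (a 1 + a 3) ^ 2 ≤ (m : ℝ) * (ε ^ 2 * D13 ^ 2) := by
    rw [show 18 * L / ε ^ 2 * (2 * (a 1 + a 3) ^ 2 / D13 ^ 2)
        = 36 * L * (a 1 + a 3) ^ 2 / (ε ^ 2 * D13 ^ 2) by
      field_simp; ring] at hmax1
    exact (div_le_iff₀ (by positivity)).mp hmax1
  have hM02 : 36 * L * (a 0 + a 2) ^ 2 ≤ (m : ℝ) * (ε ^ 2 * D02 ^ 2) := by
    rw [show 18 * L / ε ^ 2 * (2 * (a 0 + a 2) ^ 2 / D02 ^ 2)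
        = 36 * L * (a 0 + a 2) ^ 2 / (ε ^ 2 * D02 ^ 2) by
      field_simp; ring] at hmax2
    exact (div_le_iff₀ (by positivity)).mp hmax2
  set t : Fin 4 → ℝ := fun j => Real.sqrt (9 * L / (16 * (n j : ℝ))) with ht_def
  have ht0 : ∀ j, 0 ≤ t j := fun j => Real.sqrt_nonneg _
  have hnpos : ∀ j, (0 : ℝ) < (n j : ℝ) := fun j => Nat.cast_pos.mpr (hn j)
  have hmR : (0 : ℝ) < (m : ℝ) := Nat.cast_pos.mpr hm0
  have hgroup13 : a 1 * t 1 + a 3 * t 3 ≤ ε / 4 * D13 :=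
    group_sqrt_bound ha1 ha3 (hnpos 1) (hnpos 3) hmR hL.le hD13pos hε0 halloc2 halloc4 hM13
  have hgroup02 : a 0 * t 0 + a 2 * t 2 ≤ ε / 4 * D02 :=
    group_sqrt_bound ha0 ha2 (hnpos 0) (hnpos 2) hmR hL.le hD02pos hε0 halloc1 halloc3 hM02
  -- event inclusion
  have hsub : {ω | ε ≤
        |ATE (pOf a (fun j =>
            ((Finset.univ.filter fun i => W j i ω = true).card : ℝ) / n j)) -
          ATE (pOf a q)|}
      ⊆ ⋃ j : Fin 4, {ω | t j ≤
          |((Finset.univ.filter fun i => W j i ω = true).card : ℝ) / n j - q j|} := by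
    intro ω hω
    simp only [Set.mem_setOf_eq] at hω
    by_contra hnot
    simp only [Set.mem_iUnion, Set.mem_setOf_eq, not_exists, not_le] at hnot
    set qb : Fin 4 → ℝ := fun j =>
      ((Finset.univ.filter fun i => W j i ω = true).card : ℝ) / n j with hqb_def
    have hqb0 : ∀ j, 0 ≤ qb j := fun j => by positivity
    have hqb1 : ∀ j, qb j ≤ 1 := by
      intro j
      rw [hqb_def]
      rw [div_le_one (hnpos j)]
      have hcard : (Finset.univ.filter fun i => W j i ω = true).card ≤ n j := by
        calc (Finset.univ.filter fun i => W j i ω = true).card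
            ≤ (Finset.univ : Finset (Fin (n j))).card := Finset.card_filter_le _ _
          _ = n j := by simp
      exact_mod_cast hcard
    have hAbound : a 1 * |qb 1 - q 1| + a 3 * |qb 3 - q 3| ≤ ε / 4 * D13 := by
      have h1 := (hnot 1).le
      have h3 := (hnot 3).le
      have h1' : a 1 * |qb 1 - q 1| ≤ a 1 * t 1 := mul_le_mul_of_nonneg_left h1 (ha 1)
      have h3' : a 3 * |qb 3 - q 3| ≤ a 3 * t 3 := mul_le_mul_of_nonneg_left h3 (ha 3)
      calc a 1 * |qb 1 - q 1| + a 3 * |qb 3 - q 3| ≤ a 1 * t 1 + a 3 * t 3 := by linarith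
        _ ≤ ε / 4 * D13 := hgroup13
    have hBbound : a 0 * |qb 0 - q 0| + a 2 * |qb 2 - q 2| ≤ ε / 4 * D02 := by
      have h0 := (hnot 0).le
      have h2 := (hnot 2).le
      have h0' : a 0 * |qb 0 - q 0| ≤ a 0 * t 0 := mul_le_mul_of_nonneg_left h0 (ha 0)
      have h2' : a 2 * |qb 2 - q 2| ≤ a 2 * t 2 := mul_le_mul_of_nonneg_left h2 (ha 2)
      calc a 0 * |qb 0 - q 0| + a 2 * |qb 2 - q 2| ≤ a 0 * t 0 + a 2 * t 2 := by linarith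
        _ ≤ ε / 4 * D02 := hgroup02
    have hdet := det_bound a q qb hε0 hε1 ha hasum hq0 hq1 hqb0 hqb1 h37 h48 h15 h26
      (hD13 ▸ hAbound) (hD02 ▸ hBbound)
    have : |ATE (pOf a qb) - ATE (pOf a q)| < ε := lt_of_le_of_lt hdet (by linarith)
    exact absurd hω (not_le.mpr this)
  -- per-coordinate tail bound
  have hEj : ∀ j : Fin 4, μ {ω | t j ≤
      |((Finset.univ.filter fun i => W j i ω = true).card : ℝ) / n j - q j|}
      ≤ ENNReal.ofReal (Real.exp (-(9 / 8) * L)) + ENNReal.ofReal (Real.exp (-(9 / 8) * L)) := by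
    intro j
    have hind_j : iIndepFun (fun i : Fin (n j) => W j i) μ :=
      iIndepFun_precomp' (fun i : Fin (n j) => (⟨j, i⟩ : Σ j', Fin (n j')))
        (fun _ _ h => by
          have := sigma_mk_injective (i := j) h
          exact this) hindep
    have htail := binom_tail_abs μ (hn j) (fun i => hWmeas j i) hind_j (hq0 j) (hq1 j)
      (fun i => hdist j i) (ht0 j)
    have hexp : -2 * ((n j : ℝ)) * (t j) ^ 2 = -(9 / 8) * L := by
      have hsq : (t j) ^ 2 = 9 * L / (16 * (n j : ℝ)) := by
        rw [ht_def]
        exact Real.sq_sqrt (by positivity)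
      have hne : ((n j : ℝ)) ≠ 0 := (hnpos j).ne'
      rw [hsq]
      calc -2 * ((n j : ℝ)) * (9 * L / (16 * ((n j : ℝ)))) = -(9 / 8) * L * ((n j : ℝ) / (n j : ℝ)) := by
            ring
        _ = -(9 / 8) * L := by rw [div_self hne, mul_one]
    rw [hexp] at htail
    exact htail
  -- union bound
  have hc0 : (0 : ℝ) ≤ Real.exp (-(9 / 8) * L) := (Real.exp_pos _).le
  calc μ {ω | ε ≤
        |ATE (pOf a (fun j =>
            ((Finset.univ.filter fun i => W j i ω = true).card : ℝ) / n j)) -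
          ATE (pOf a q)|}
      ≤ μ (⋃ j : Fin 4, {ω | t j ≤
          |((Finset.univ.filter fun i => W j i ω = true).card : ℝ) / n j - q j|}) :=
        measure_mono hsub
    _ ≤ ∑ j : Fin 4, μ {ω | t j ≤
          |((Finset.univ.filter fun i => W j i ω = true).card : ℝ) / n j - q j|} :=
        measure_iUnion_fintype_le _ _
    _ ≤ ∑ _j : Fin 4, (ENNReal.ofReal (Real.exp (-(9 / 8) * L))
          + ENNReal.ofReal (Real.exp (-(9 / 8) * L))) :=
        Finset.sum_le_sum fun j _ => hEj j
    _ = 4 * (ENNReal.ofReal (Real.exp (-(9 / 8) * L))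
          + ENNReal.ofReal (Real.exp (-(9 / 8) * L))) := by
        rw [Finset.sum_const]
        simp only [Finset.card_univ, Fintype.card_fin, nsmul_eq_mul, Nat.cast_ofNat]
    _ = ENNReal.ofReal (4 * (Real.exp (-(9 / 8) * L) + Real.exp (-(9 / 8) * L))) := by
        rw [← ENNReal.ofReal_add hc0 hc0, ← ENNReal.ofReal_ofNat 4,
          ← ENNReal.ofReal_mul (by norm_num)]
    _ < ENNReal.ofReal δ := by
        rw [ENNReal.ofReal_lt_ofReal_iff hδ0]
        have h1 : Real.exp (-(9 / 8) * L) < Real.exp (-L) :=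
          Real.exp_lt_exp.mpr (by linarith)
        have h2 : Real.exp (-L) = δ / 8 := by
          rw [hL_def, Real.exp_neg, Real.exp_log (by positivity), inv_div]
        linarith [h1, h2]
end

section
/- For every real M > 0 there exist A > 0, B > 0 and a_1, a_2, a_3, a_4 ≥ 0 with a_1+a_2+a_3+a_4 = 1 such that M_ratio(a) ≤ M_distr(a) and M_distr(a) ≥ M · M_ratio(a); that is, the supremum over a of M_distr(a)/M_ratio(a) on the region where M_distr ≥ M_ratio is unbounded, with M_distr(a)/M_ratio(a) ≥ 1/(2(a_2+a_4)) → ∞ as a_2+a_4 → 0. -/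
/-- Corollary 1, second part: on the region where
`M_distr = max((a₂+a₄)/A, (a₁+a₃)/B)` dominates
`M_ratio = max(2(a₂+a₄)²/A, 2(a₁+a₃)²/B)`, the ratio `M_distr / M_ratio`
is unbounded: for every `M > 0` there are admissible parameters with
`M_ratio ≤ M_distr` and `M_distr ≥ M · M_ratio`. -/
theorem distr_over_ratio_unbounded :
    ∀ M : ℝ, 0 < M → ∃ A B a1 a2 a3 a4 : ℝ,
      0 < A ∧ 0 < B ∧ 0 ≤ a1 ∧ 0 ≤ a2 ∧ 0 ≤ a3 ∧ 0 ≤ a4 ∧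
      a1 + a2 + a3 + a4 = 1 ∧
      max (2 * (a2 + a4) ^ 2 / A) (2 * (a1 + a3) ^ 2 / B) ≤
        max ((a2 + a4) / A) ((a1 + a3) / B) ∧
      max ((a2 + a4) / A) ((a1 + a3) / B) ≥
        M * max (2 * (a2 + a4) ^ 2 / A) (2 * (a1 + a3) ^ 2 / B) := by
  intro M hM
  set t : ℝ := 1 / (2 * M + 2) with ht
  have hden : (0:ℝ) < 2 * M + 2 := by linarith
  have ht0 : 0 < t := by positivity
  have ht1 : t ≤ 1 / 2 := by
    rw [ht, div_le_div_iff₀ hden (by norm_num)]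
    linarith
  have htM : 2 * M * t ≤ 1 := by
    rw [ht, mul_one_div, div_le_one hden]
    linarith
  have e1 : 2 * (t + 0) ^ 2 / t = 2 * t := by field_simp; ring
  have e2 : 2 * (1 - t + 0) ^ 2 / (1 / t) = 2 * t * (1 - t) ^ 2 := by
    field_simp; ring
  have e3 : (t + 0) / t = 1 := by field_simp; ring
  have e4 : (1 - t + 0) / (1 / t) = t * (1 - t) := by field_simp; ring
  refine ⟨t, 1 / t, 1 - t, t, 0, 0, ht0, by positivity, by linarith, le_of_lt ht0,
    le_refl 0, le_refl 0, by ring, ?_, ?_⟩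
  · rw [e1, e2, e3, e4]
    have h1 : 2 * t ≤ 1 := by linarith
    have h2 : 2 * t * (1 - t) ^ 2 ≤ 1 := by nlinarith
    exact le_trans (max_le h1 h2) (le_max_left _ _)
  · rw [e1, e2, e3, e4]
    have hY : 2 * t * (1 - t) ^ 2 ≤ 2 * t := by nlinarith
    have : M * max (2 * t) (2 * t * (1 - t) ^ 2) = M * (2 * t) := by
      rw [max_eq_left hY]
    rw [this]
    calc M * (2 * t) = 2 * M * t := by ring
      _ ≤ 1 := htM
      _ ≤ max 1 (t * (1 - t)) := le_max_left _ _
end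

section
/- Deterministic sufficient conditions for accurate ATE estimation: let p_1,...,p_8 ≥ 0 with Σ p_i = 1 and p̂_1,...,p̂_8 ≥ 0 with Σ p̂_i = 1, let 0 < ε ≤ 1, and suppose p_3+p_7 > 0, p_4+p_8 > 0, p_1+p_5 > 0, p_2+p_6 > 0 and likewise p̂_3+p̂_7 > 0, p̂_4+p̂_8 > 0, p̂_1+p̂_5 > 0, p̂_2+p̂_6 > 0. If the following eight inequalities hold: |p_7 − p̂_7| ≤ (p_3+p_7)ε/6, |p_3+p_7 − p̂_3 − p̂_7| ≤ (p_3+p_7)ε/6, |p_8 − p̂_8| ≤ (p_4+p_8)ε/6, |p_4+p_8 − p̂_4 − p̂_8| ≤ (p_4+p_8)ε/6, |p_5 − p̂_5| ≤ (p_1+p_5)ε/6, |p_1+p_5 − p̂_1 − p̂_5| ≤ (p_1+p_5)ε/6, |p_6 − p̂_6| ≤ (p_2+p_6)ε/6, and |p_2+p_6 − p̂_2 − p̂_6| ≤ (p_2+p_6)ε/6, then |ATE(p̂_1,...,p̂_8) − ATE(p_1,...,p_8)| ≤ ε. -/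
set_option maxHeartbeats 1000000

lemma ratio_bound (a d ah dh δ : ℝ) (hδ0 : 0 < δ) (hδ : δ ≤ 1/6)
    (ha : 0 ≤ a) (had : a ≤ d) (hd : 0 < d) (hdh : 0 < dh)
    (h1 : |a - ah| ≤ d * δ) (h2 : |d - dh| ≤ d * δ) :
    |ah / dh - a / d| * (1 - δ) ≤ δ * (1 + a / d) := by
  have hδ1 : (0:ℝ) < 1 - δ := by linarith
  have A := (abs_le.mp h1).1
  have B := (abs_le.mp h1).2
  have C := (abs_le.mp h2).1
  have D := (abs_le.mp h2).2
  have hdh' : d * (1 - δ) ≤ dh := by nlinarith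
  have key : ah / dh - a / d = (ah * d - a * dh) / (dh * d) := by
    field_simp
  have hnum : |ah * d - a * dh| ≤ (d + a) * (d * δ) := by
    rw [abs_le]
    constructor <;> nlinarith [mul_le_mul_of_nonneg_right B hd.le,
      mul_le_mul_of_nonneg_right A hd.le,
      mul_le_mul_of_nonneg_left D ha, mul_le_mul_of_nonneg_left C ha]
  rw [key, abs_div, abs_of_pos (mul_pos hdh hd)]
  rw [div_mul_eq_mul_div, div_le_iff₀ (mul_pos hdh hd)]
  have H : δ * (1 + a / d) * (dh * d) = δ * (d + a) * dh := by
    field_simp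
  rw [H]
  nlinarith [mul_le_mul_of_nonneg_right hnum hδ1.le,
    mul_le_mul_of_nonneg_left hdh' (mul_nonneg hδ0.le (by linarith : (0:ℝ) ≤ d + a)),
    abs_nonneg (ah * d - a * dh)]

lemma bracket (δ q qh r1 r1h r3 r3h : ℝ)
    (hδ0 : 0 < δ) (hδ : δ ≤ 1/6)
    (hq0 : 0 ≤ q)
    (hqd : |qh - q| ≤ q * δ)
    (hr1 : 0 ≤ r1) (hr1' : r1 ≤ 1) (hr3 : 0 ≤ r3) (hr3' : r3 ≤ 1)
    (hb1 : |r1h - r1| * (1 - δ) ≤ δ * (1 + r1))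
    (hb3 : |r3h - r3| * (1 - δ) ≤ δ * (1 + r3)) :
    |qh * (r1h - r3h) - q * (r1 - r3)| ≤ 6 * δ * q := by
  have hδ1 : (0:ℝ) < 1 - δ := by linarith
  have hqd1 := (abs_le.mp hqd).1
  have hqd2 := (abs_le.mp hqd).2
  have hqh0 : 0 ≤ qh := by nlinarith [mul_nonneg hq0 hδ0.le, mul_nonneg hq0 hδ1.le]
  have hqh : qh ≤ q * (1 + δ) := by nlinarith
  have hT1 : |r1 - r3| ≤ r1 + r3 := abs_le.mpr ⟨by linarith, by linarith⟩
  have hT2 : |r1 - r3| ≤ 2 - r1 - r3 := abs_le.mpr ⟨by linarith, by linarith⟩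
  have hT0 : 0 ≤ |r1 - r3| := abs_nonneg _
  have hB : (|r1h - r1| + |r3h - r3|) * (1 - δ) ≤ δ * (2 + r1 + r3) := by nlinarith
  have hA : |(r1h - r1) - (r3h - r3)| ≤ |r1h - r1| + |r3h - r3| := abs_sub _ _
  have hid : qh * (r1h - r3h) - q * (r1 - r3)
      = qh * ((r1h - r1) - (r3h - r3)) + (qh - q) * (r1 - r3) := by ring
  have step : |qh * (r1h - r3h) - q * (r1 - r3)|
      ≤ qh * (|r1h - r1| + |r3h - r3|) + |qh - q| * |r1 - r3| := by
    rw [hid]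
    calc |qh * ((r1h - r1) - (r3h - r3)) + (qh - q) * (r1 - r3)|
        ≤ |qh * ((r1h - r1) - (r3h - r3))| + |(qh - q) * (r1 - r3)| := abs_add_le _ _
      _ = qh * |(r1h - r1) - (r3h - r3)| + |qh - q| * |r1 - r3| := by
          rw [abs_mul, abs_mul, abs_of_nonneg hqh0]
      _ ≤ qh * (|r1h - r1| + |r3h - r3|) + |qh - q| * |r1 - r3| := by
          have := mul_le_mul_of_nonneg_left hA hqh0
          linarith
  have main : (qh * (|r1h - r1| + |r3h - r3|) + |qh - q| * |r1 - r3|) * (1 - δ)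
      ≤ (6 * δ * q) * (1 - δ) := by
    have hBnn : 0 ≤ |r1h - r1| + |r3h - r3| := by positivity
    have step1 : qh * ((|r1h - r1| + |r3h - r3|) * (1 - δ))
        ≤ (q * (1 + δ)) * (δ * (2 + r1 + r3)) := by
      apply mul_le_mul hqh hB (by positivity) (by nlinarith)
    have step2 : |qh - q| * |r1 - r3| ≤ (q * δ) * |r1 - r3| :=
      mul_le_mul_of_nonneg_right hqd hT0
    have final : (q * (1 + δ)) * (δ * (2 + r1 + r3)) + (q * δ) * |r1 - r3| * (1 - δ)
        ≤ (6 * δ * q) * (1 - δ) := by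
      nlinarith [mul_nonneg (mul_nonneg hq0 hδ0.le) (by linarith : (0:ℝ) ≤ 2 - r1 - r3 - |r1 - r3|),
        mul_nonneg (mul_nonneg (mul_nonneg hq0 hδ0.le) hδ0.le)
          (by linarith : (0:ℝ) ≤ 2 - (r1 + r3) + |r1 - r3|),
        mul_nonneg (mul_nonneg hq0 hδ0.le) (by linarith : (0:ℝ) ≤ 2 - 10 * δ)]
    nlinarith [mul_le_mul_of_nonneg_right step2 hδ1.le]
  have : qh * (|r1h - r1| + |r3h - r3|) + |qh - q| * |r1 - r3| ≤ 6 * δ * q :=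
    (mul_le_mul_iff_of_pos_right hδ1).mp main
  linarith


/-- Deterministic sufficient conditions for accurate ATE estimation: if the
eight componentwise deviation bounds of the paper hold at scale `ε/6`, then
the plug-in ATE estimate is within `ε` of the truth. -/
theorem ate_est_of_componentwise_bounds
    (p phat : Fin 8 → ℝ)
    (hp : ∀ j, 0 ≤ p j) (hpsum : ∑ j, p j = 1)
    (hphat : ∀ j, 0 ≤ phat j) (hphatsum : ∑ j, phat j = 1)
    (ε : ℝ) (hε0 : 0 < ε) (hε1 : ε ≤ 1)
    (h37 : 0 < p 2 + p 6) (h48 : 0 < p 3 + p 7)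
    (h15 : 0 < p 0 + p 4) (h26 : 0 < p 1 + p 5)
    (h37' : 0 < phat 2 + phat 6) (h48' : 0 < phat 3 + phat 7)
    (h15' : 0 < phat 0 + phat 4) (h26' : 0 < phat 1 + phat 5)
    (e1 : |p 6 - phat 6| ≤ (p 2 + p 6) * ε / 6)
    (e2 : |p 2 + p 6 - phat 2 - phat 6| ≤ (p 2 + p 6) * ε / 6)
    (e3 : |p 7 - phat 7| ≤ (p 3 + p 7) * ε / 6)
    (e4 : |p 3 + p 7 - phat 3 - phat 7| ≤ (p 3 + p 7) * ε / 6)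
    (e5 : |p 4 - phat 4| ≤ (p 0 + p 4) * ε / 6)
    (e6 : |p 0 + p 4 - phat 0 - phat 4| ≤ (p 0 + p 4) * ε / 6)
    (e7 : |p 5 - phat 5| ≤ (p 1 + p 5) * ε / 6)
    (e8 : |p 1 + p 5 - phat 1 - phat 5| ≤ (p 1 + p 5) * ε / 6) :
    |ATE phat - ATE p| ≤ ε := by
  rw [Fin.sum_univ_eight] at hpsum hphatsum
  have hδ0 : 0 < ε / 6 := by linarith
  have hδ : ε / 6 ≤ 1 / 6 := by linarith
  -- abbreviations (as plain expressions)
  -- q and qhat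
  have hq0 : 0 ≤ p 0 + p 2 + p 4 + p 6 := by
    have := hp 0; have := hp 2; have := hp 4; have := hp 6; linarith
  have hq1 : p 0 + p 2 + p 4 + p 6 ≤ 1 := by
    have := hp 1; have := hp 3; have := hp 5; have := hp 7; linarith
  -- deviation of q
  have hqd : |(phat 0 + phat 2 + phat 4 + phat 6) - (p 0 + p 2 + p 4 + p 6)|
      ≤ (p 0 + p 2 + p 4 + p 6) * (ε / 6) := by
    have a2 := abs_le.mp e2
    have a6 := abs_le.mp e6
    rw [abs_le]
    constructor <;> linarith [a2.1, a2.2, a6.1, a6.2]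
  -- deviation of 1 - q
  have hqd' : |(1 - (phat 0 + phat 2 + phat 4 + phat 6)) - (1 - (p 0 + p 2 + p 4 + p 6))|
      ≤ (1 - (p 0 + p 2 + p 4 + p 6)) * (ε / 6) := by
    have a4 := abs_le.mp e4
    have a8 := abs_le.mp e8
    rw [show (1:ℝ) - (p 0 + p 2 + p 4 + p 6) = p 1 + p 3 + p 5 + p 7 from by linarith,
      show (1:ℝ) - (phat 0 + phat 2 + phat 4 + phat 6) = phat 1 + phat 3 + phat 5 + phat 7
        from by linarith]
    rw [abs_le]
    constructor <;> linarith [a4.1, a4.2, a8.1, a8.2]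
  -- ratio bounds
  have R1 := ratio_bound (p 6) (p 2 + p 6) (phat 6) (phat 2 + phat 6) (ε/6) hδ0 hδ
    (hp 6) (by linarith [hp 2]) h37 h37'
    (by have := e1; linarith)
    (by rw [show (p 2 + p 6) - (phat 2 + phat 6) = p 2 + p 6 - phat 2 - phat 6 from by ring]
        linarith [e2])
  have R2 := ratio_bound (p 7) (p 3 + p 7) (phat 7) (phat 3 + phat 7) (ε/6) hδ0 hδ
    (hp 7) (by linarith [hp 3]) h48 h48'
    (by have := e3; linarith)
    (by rw [show (p 3 + p 7) - (phat 3 + phat 7) = p 3 + p 7 - phat 3 - phat 7 from by ring]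
        linarith [e4])
  have R3 := ratio_bound (p 4) (p 0 + p 4) (phat 4) (phat 0 + phat 4) (ε/6) hδ0 hδ
    (hp 4) (by linarith [hp 0]) h15 h15'
    (by have := e5; linarith)
    (by rw [show (p 0 + p 4) - (phat 0 + phat 4) = p 0 + p 4 - phat 0 - phat 4 from by ring]
        linarith [e6])
  have R4 := ratio_bound (p 5) (p 1 + p 5) (phat 5) (phat 1 + phat 5) (ε/6) hδ0 hδ
    (hp 5) (by linarith [hp 1]) h26 h26'
    (by have := e7; linarith)
    (by rw [show (p 1 + p 5) - (phat 1 + phat 5) = p 1 + p 5 - phat 1 - phat 5 from by ring]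
        linarith [e8])
  -- r in [0,1] facts
  have r1n : 0 ≤ p 6 / (p 2 + p 6) := div_nonneg (hp 6) h37.le
  have r1b : p 6 / (p 2 + p 6) ≤ 1 := (div_le_one h37).mpr (by linarith [hp 2])
  have r2n : 0 ≤ p 7 / (p 3 + p 7) := div_nonneg (hp 7) h48.le
  have r2b : p 7 / (p 3 + p 7) ≤ 1 := (div_le_one h48).mpr (by linarith [hp 3])
  have r3n : 0 ≤ p 4 / (p 0 + p 4) := div_nonneg (hp 4) h15.le
  have r3b : p 4 / (p 0 + p 4) ≤ 1 := (div_le_one h15).mpr (by linarith [hp 0])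
  have r4n : 0 ≤ p 5 / (p 1 + p 5) := div_nonneg (hp 5) h26.le
  have r4b : p 5 / (p 1 + p 5) ≤ 1 := (div_le_one h26).mpr (by linarith [hp 1])
  have B1 := bracket (ε/6) (p 0 + p 2 + p 4 + p 6) (phat 0 + phat 2 + phat 4 + phat 6)
    (p 6 / (p 2 + p 6)) (phat 6 / (phat 2 + phat 6))
    (p 4 / (p 0 + p 4)) (phat 4 / (phat 0 + phat 4))
    hδ0 hδ hq0 hqd r1n r1b r3n r3b R1 R3
  have B2 := bracket (ε/6) (1 - (p 0 + p 2 + p 4 + p 6)) (1 - (phat 0 + phat 2 + phat 4 + phat 6))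
    (p 7 / (p 3 + p 7)) (phat 7 / (phat 3 + phat 7))
    (p 5 / (p 1 + p 5)) (phat 5 / (phat 1 + phat 5))
    hδ0 hδ (by linarith) hqd' r2n r2b r4n r4b R2 R4
  have hATE : ATE phat - ATE p
      = ((phat 0 + phat 2 + phat 4 + phat 6) * (phat 6 / (phat 2 + phat 6) - phat 4 / (phat 0 + phat 4))
          - (p 0 + p 2 + p 4 + p 6) * (p 6 / (p 2 + p 6) - p 4 / (p 0 + p 4)))
        + ((1 - (phat 0 + phat 2 + phat 4 + phat 6)) * (phat 7 / (phat 3 + phat 7) - phat 5 / (phat 1 + phat 5))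
          - (1 - (p 0 + p 2 + p 4 + p 6)) * (p 7 / (p 3 + p 7) - p 5 / (p 1 + p 5))) := by
    simp only [ATE]; ring
  rw [hATE]
  calc |_ + _| ≤ _ + _ := abs_add_le _ _
    _ ≤ 6 * (ε/6) * (p 0 + p 2 + p 4 + p 6)
        + 6 * (ε/6) * (1 - (p 0 + p 2 + p 4 + p 6)) := add_le_add B1 B2
    _ = ε := by ring
end
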